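/- Consider the ℚ-algebra A = ℚ[X_1, X_1', X_2, X_2'] / ⟨X_1 X_1' - (1 + X_2), X_2 X_2' - (1 + X_1^n)⟩ for n ≥ 1 (the rank-2 acyclic cluster algebra with exchange matrix B = [[0, n], [-1, 0]] and no frozen variables). If n is a power of 2, then A is a unique factorization domain. -/

import Mathlib

/-- The rank-2 acyclic cluster algebra over `ℚ` with exchange matrix `[[0,n],[-1,0]]`,
in its Berenstein–Fomin–Zelevinsky presentation
`ℚ[X₁,X₁',X₂,X₂']/⟨X₁X₁' - (1+X₂), X₂X₂' - (1+X₁ⁿ)⟩`. -/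
noncomputable abbrev clusterAlgRank2 (n : ℕ) : Type :=
  MvPolynomial (Fin 4) ℚ ⧸ Ideal.span
    {(MvPolynomial.X 0 * MvPolynomial.X 1 - (1 + MvPolynomial.X 2) : MvPolynomial (Fin 4) ℚ),
      MvPolynomial.X 2 * MvPolynomial.X 3 - (1 + MvPolynomial.X 0 ^ n)}

set_option synthInstance.maxHeartbeats 1000000
set_option maxHeartbeats 1000000

open scoped Classical in
theorem ufd_of_isLocalization {R L : Type*} [CommRing R] [IsDomain R]
    [UniqueFactorizationMonoid R] (M : Submonoid R) (hM : M ≤ nonZeroDivisors R)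
    [CommRing L] [IsDomain L] [Algebra R L] [IsLocalization M L] :
    UniqueFactorizationMonoid L := by
  have hinj : Function.Injective (algebraMap R L) := IsLocalization.injective L hM
  have key : ∀ p : R, Prime p → IsUnit (algebraMap R L p) ∨ Prime (algebraMap R L p) := by
    intro p hp
    by_cases hd : ∃ m ∈ M, p ∣ m
    · left
      obtain ⟨m, hm, c, rfl⟩ := hd
      exact isUnit_of_mul_isUnit_left
        (by rw [← map_mul]; exact IsLocalization.map_units L ⟨_, hm⟩)
    · right
      have hspan : (Ideal.span {p}).IsPrime := (Ideal.span_singleton_prime hp.ne_zero).2 hp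
      have hdisj : Disjoint (M : Set R) (Ideal.span {p} : Set R) := by
        rw [Set.disjoint_left]
        intro m hm hmem
        exact hd ⟨m, hm, Ideal.mem_span_singleton.1 hmem⟩
      have hmap := IsLocalization.isPrime_of_isPrime_disjoint M L _ hspan hdisj
      rw [Ideal.map_span, Set.image_singleton] at hmap
      have hne : algebraMap R L p ≠ 0 := fun h => hp.ne_zero (hinj (by simp [h]))
      exact (Ideal.span_singleton_prime hne).1 hmap
  apply UniqueFactorizationMonoid.of_exists_prime_factors
  intro x hx
  obtain ⟨⟨a, s⟩, hsurj⟩ := IsLocalization.surj M x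
  have hsu : IsUnit (algebraMap R L (s : R)) := IsLocalization.map_units L s
  have ha : a ≠ 0 := by
    rintro rfl
    rw [map_zero] at hsurj
    exact hx (by simpa [hsurj.symm, hsu.ne_zero] using mul_eq_zero.1 hsurj |>.resolve_right hsu.ne_zero)
  obtain ⟨f, hf, hfa⟩ := UniqueFactorizationMonoid.exists_prime_factors a ha
  set g : Multiset L := f.map (algebraMap R L) with hg
  refine ⟨g.filter (fun q => ¬ IsUnit q), ?_, ?_⟩
  · intro q hq
    rw [Multiset.mem_filter, hg, Multiset.mem_map] at hq
    obtain ⟨⟨p, hpf, rfl⟩, hnu⟩ := hq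
    exact (key p (hf p hpf)).resolve_left hnu
  · have h1 : Associated g.prod (algebraMap R L a) := by
      rw [hg, Multiset.prod_hom]
      exact hfa.map (algebraMap R L).toMonoidHom
    have h2 : Associated (algebraMap R L a) x := by
      rw [← hsurj]
      exact associated_mul_unit_left x _ hsu
    have h3 : Associated (g.filter (fun q => ¬ IsUnit q)).prod g.prod := by
      conv_rhs => rw [← Multiset.filter_add_not (fun q => ¬ IsUnit q) g]
      rw [Multiset.prod_add]
      refine (associated_mul_unit_left _ _ ?_).symm
      have hall : ∀ (m : Multiset L), (∀ q ∈ m, IsUnit q) → IsUnit m.prod := fun m =>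
        Multiset.induction_on m (by simp) (by
          intro a s ih h
          rw [Multiset.prod_cons]
          exact (h a (Multiset.mem_cons_self a s)).mul (ih fun q hq => h q (Multiset.mem_cons_of_mem hq)))
      exact hall _ (fun q hq => not_not.1 (Multiset.mem_filter.1 hq).2)
    exact (h3.trans h1).trans h2

theorem nagata_ufd {R : Type*} [CommRing R] [IsDomain R] [WfDvdMonoid R] {P : Set R}
    (hP : ∀ p ∈ P, Prime p) (L : Type*) [CommRing L] [IsDomain L] [Algebra R L]
    [IsLocalization (Submonoid.closure P) L] [UniqueFactorizationMonoid L] :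
    UniqueFactorizationMonoid R := by
  set M := Submonoid.closure P with hMdef
  have hM0 : ∀ s ∈ M, s ≠ (0 : R) := by
    intro s hs
    induction hs using Submonoid.closure_induction with
    | mem p hp => exact (hP p hp).ne_zero
    | one => exact one_ne_zero
    | mul a b _ _ ha hb => exact mul_ne_zero ha hb
  have hMle : M ≤ nonZeroDivisors R := fun s hs => mem_nonZeroDivisors_of_ne_zero (hM0 s hs)
  have hinj : Function.Injective (algebraMap R L) := IsLocalization.injective L hMle
  have keyA : ∀ q : R, (∀ p ∈ P, ¬ p ∣ q) → ∀ s ∈ M, ∀ a b : R, s * a = q * b → q ∣ a := by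
    intro q hq s hs
    induction hs using Submonoid.closure_induction with
    | mem p hp =>
      intro a b hab
      have hpb : p ∣ b := by
        have : p ∣ q * b := ⟨a, hab.symm⟩
        exact ((hP p hp).dvd_or_dvd this).resolve_left (hq p hp)
      obtain ⟨b', rfl⟩ := hpb
      refine ⟨b', mul_left_cancel₀ (hP p hp).ne_zero ?_⟩
      rw [hab]; ring
    | one => intro a b h; exact ⟨b, by rwa [one_mul] at h⟩
    | mul s t _ _ ihs iht =>
      intro a b h
      obtain ⟨c, hc⟩ := ihs (t * a) b (by rw [← h]; ring)
      exact iht a c hc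
  have keyC : ∀ s ∈ M, ∀ c a b : R, s * c = a * b →
      ∃ a' b', c = a' * b' ∧ a' ∣ a ∧ b' ∣ b := by
    intro s hs
    induction hs using Submonoid.closure_induction with
    | mem p hp =>
      intro c a b hab
      have hpab : p ∣ a * b := ⟨c, hab.symm⟩
      rcases (hP p hp).dvd_or_dvd hpab with ⟨a₀, rfl⟩ | ⟨b₀, rfl⟩
      · refine ⟨a₀, b, mul_left_cancel₀ (hP p hp).ne_zero (by rw [hab]; ring), ⟨p, mul_comm _ _⟩, dvd_rfl⟩
      · refine ⟨a, b₀, mul_left_cancel₀ (hP p hp).ne_zero (by rw [hab]; ring), dvd_rfl, ⟨p, mul_comm _ _⟩⟩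
    | one => intro c a b h; exact ⟨a, b, by rwa [one_mul] at h, dvd_rfl, dvd_rfl⟩
    | mul s t _ _ ihs iht =>
      intro c a b h
      obtain ⟨a₁, b₁, hc₁, ha₁, hb₁⟩ := ihs (t * c) a b (by rw [← h]; ring)
      obtain ⟨a', b', hc, ha', hb'⟩ := iht c a₁ b₁ hc₁
      exact ⟨a', b', hc, ha'.trans ha₁, hb'.trans hb₁⟩
  refine { ‹WfDvdMonoid R› with irreducible_iff_prime := ?_ }
  intro q
  refine ⟨fun hirr => ?_, Prime.irreducible⟩
  by_cases hdvd : ∃ p ∈ P, p ∣ q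
  · obtain ⟨p, hp, c, rfl⟩ := hdvd
    have hcu : IsUnit c := (hirr.isUnit_or_isUnit rfl).resolve_left (hP p hp).not_unit
    exact ((associated_mul_unit_left p c hcu).symm).prime (hP p hp)
  · push_neg at hdvd
    have hq0 : q ≠ 0 := hirr.ne_zero
    set f := algebraMap R L with hfdef
    have hfq0 : f q ≠ 0 := fun h => hq0 (hinj (by simpa using h))
    have hfqnu : ¬ IsUnit (f q) := by
      intro hu
      obtain ⟨u, hu'⟩ := hu
      obtain ⟨⟨c, t⟩, hct⟩ := IsLocalization.surj M ((u⁻¹ : Lˣ) : L)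
      have h1 : f q * ((u⁻¹ : Lˣ) : L) = 1 := by rw [← hu']; simp
      have h2 : f ((t : R) * 1) = f (q * c) := by
        push_cast [map_mul, map_one]
        calc f (t : R) * 1 = f q * (((u⁻¹ : Lˣ) : L) * f (t:R)) := by rw [← mul_assoc, h1, one_mul, mul_one]
        _ = f q * f c := by rw [hct]
      have h3 : (t : R) * 1 = q * c := hinj h2
      obtain ⟨d, hd⟩ := keyA q hdvd (t : R) t.2 1 c h3
      exact hirr.not_isUnit (IsUnit.of_mul_eq_one d (by rw [← hd]))
    have hfirr : Irreducible (f q) := by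
      refine ⟨hfqnu, ?_⟩
      intro α β hαβ
      obtain ⟨⟨a, s⟩, hA⟩ := IsLocalization.surj M α
      obtain ⟨⟨b, t⟩, hB⟩ := IsLocalization.surj M β
      have hab : a * b = q * ((s : R) * (t : R)) := by
        apply hinj
        push_cast [map_mul]
        rw [← hA, ← hB, hαβ]; ring
      obtain ⟨a', b', hq', ha', hb'⟩ := keyC ((s : R) * (t : R)) (mul_mem s.2 t.2) q a b
        (by rw [hab]; ring)
      obtain ⟨a'', rfl⟩ := ha'
      obtain ⟨b'', rfl⟩ := hb'
      have hne : a' * b' ≠ 0 := by rw [← hq']; exact hq0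
      have h2 : a'' * b'' = (s : R) * (t : R) := by
        apply mul_left_cancel₀ hne
        rw [hq'] at hab
        linear_combination hab
      have hstu : IsUnit (f ((s : R) * (t : R))) := IsLocalization.map_units L ⟨_, mul_mem s.2 t.2⟩
      have hua'' : IsUnit (f a'') := isUnit_of_dvd_unit (map_dvd f ⟨b'', h2.symm⟩) hstu
      have hub'' : IsUnit (f b'') := isUnit_of_dvd_unit (map_dvd f ⟨a'', by rw [← h2]; ring⟩) hstu
      rcases hirr.isUnit_or_isUnit hq' with h | h
      · left
        have : IsUnit (α * f (s : R)) := by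
          rw [hA, map_mul]
          exact (h.map f).mul hua''
        exact isUnit_of_mul_isUnit_left this
      · right
        have : IsUnit (β * f (t : R)) := by
          rw [hB, map_mul]
          exact (h.map f).mul hub''
        exact isUnit_of_mul_isUnit_left this
    have hfprime : Prime (f q) := UniqueFactorizationMonoid.irreducible_iff_prime.1 hfirr
    refine ⟨hq0, hirr.not_isUnit, ?_⟩
    intro a b hab
    have hfdvd : f q ∣ f a * f b := by rw [← map_mul]; exact map_dvd f hab
    have key2 : ∀ x : R, f q ∣ f x → q ∣ x := by
      intro x hx
      obtain ⟨γ, hγ⟩ := hx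
      obtain ⟨⟨c, s⟩, hs⟩ := IsLocalization.surj M γ
      have : (s : R) * x = q * c := by
        apply hinj
        push_cast [map_mul]
        rw [mul_comm (f (s:R)) (f x), hγ, mul_assoc, hs]
      exact keyA q hdvd (s : R) s.2 x c this
    rcases hfprime.dvd_or_dvd hfdvd with h | h
    · exact Or.inl (key2 a h)
    · exact Or.inr (key2 b h)

open MvPolynomial in
/-- irreducibility of `X*C a - C b` when every common divisor of `a, b` is a unit -/
theorem irred_linear {S : Type*} [CommRing S] [IsDomain S] (a b : S) (ha : a ≠ 0)
    (hcop : ∀ c : S, c ∣ a → c ∣ b → IsUnit c) :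
    Irreducible (Polynomial.X * Polynomial.C a - Polynomial.C b) := by
  set Q := Polynomial.X * Polynomial.C a - Polynomial.C b with hQ
  have hdeg : Q.degree = 1 := by
    rw [show Q = Polynomial.C a * Polynomial.X + Polynomial.C (-b) by
      rw [hQ, Polynomial.C_neg]; ring]
    rw [Polynomial.degree_add_eq_left_of_degree_lt
      (by rw [Polynomial.degree_C_mul_X ha]
          exact lt_of_le_of_lt Polynomial.degree_C_le (by norm_num))]
    exact Polynomial.degree_C_mul_X ha
  have hQ0 : Q ≠ 0 := fun h => by simp [h] at hdeg
  have hcoeff1 : Q.coeff 1 = a := by simp [hQ]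
  have hcoeff0 : Q.coeff 0 = -b := by simp [hQ]
  constructor
  · intro hu
    have := Polynomial.degree_eq_zero_of_isUnit hu
    rw [hdeg] at this
    exact one_ne_zero this
  · intro f g hfg
    have hf0 : f ≠ 0 := fun h => hQ0 (by rw [hfg, h, zero_mul])
    have hg0 : g ≠ 0 := fun h => hQ0 (by rw [hfg, h, mul_zero])
    have hnd : f.natDegree + g.natDegree = 1 := by
      rw [← Polynomial.natDegree_mul hf0 hg0, ← hfg]
      have : Q.natDegree = 1 := Polynomial.natDegree_eq_of_degree_eq_some hdeg
      exact this
    have main : ∀ u v : Polynomial S, Q = u * v → u.natDegree = 0 → IsUnit u := by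
      intro u v huv hu0
      obtain ⟨c, hc⟩ := Polynomial.natDegree_eq_zero.1 hu0
      have hcd : Polynomial.C c ∣ Q := ⟨v, by rw [huv, hc]⟩
      have hc1 : c ∣ a := by
        have := (Polynomial.C_dvd_iff_dvd_coeff c Q).1 hcd 1
        rwa [hcoeff1] at this
      have hc0 : c ∣ b := by
        have := (Polynomial.C_dvd_iff_dvd_coeff c Q).1 hcd 0
        rw [hcoeff0] at this
        exact (dvd_neg.1 this)
      rw [← hc]
      exact Polynomial.isUnit_C.2 (hcop c hc1 hc0)
    rcases Nat.eq_zero_or_pos f.natDegree with h | h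
    · exact Or.inl (main f g hfg h)
    · right
      have : g.natDegree = 0 := by omega
      exact main g f (by rw [hfg, mul_comm]) this

namespace ClusterRank2

open MvPolynomial

/-- `h = z (y x - 1) - (1 + x^n)` in `ℚ[z,y,x]` (variables `0,1,2`). -/
noncomputable def hpol (n : ℕ) : MvPolynomial (Fin 3) ℚ :=
  X 0 * (X 1 * X 2 - 1) - (1 + X 2 ^ n)

theorem irreducible_hpol (n : ℕ) (hn1 : 1 ≤ n) : Irreducible (hpol n) := by
  have e := MvPolynomial.finSuccEquiv ℚ 2
  set a : MvPolynomial (Fin 2) ℚ := X 0 * X 1 - 1 with hadef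
  set b : MvPolynomial (Fin 2) ℚ := 1 + X 1 ^ n with hbdef
  have himg : (MvPolynomial.finSuccEquiv ℚ 2) (hpol n)
      = Polynomial.X * Polynomial.C a - Polynomial.C b := by
    have h1 : (1 : Fin 3) = Fin.succ 0 := rfl
    have h2 : (2 : Fin 3) = Fin.succ 1 := rfl
    simp only [hpol, map_sub, map_mul, map_add, map_one, map_pow, h1, h2,
      MvPolynomial.finSuccEquiv_X_zero, MvPolynomial.finSuccEquiv_X_succ,
      hadef, hbdef, Polynomial.C_sub, Polynomial.C_mul, Polynomial.C_add,
      Polynomial.C_pow, Polynomial.C_1]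
  have ha : a ≠ 0 := by
    intro h
    have := congrArg (MvPolynomial.constantCoeff) h
    simp [hadef] at this
  have hcop : ∀ c : MvPolynomial (Fin 2) ℚ, c ∣ a → c ∣ b → IsUnit c := by
    intro c hca hcb
    have e2 := MvPolynomial.finSuccEquiv ℚ 1
    have hb0 : b ≠ 0 := by
      intro h
      have := congrArg (MvPolynomial.constantCoeff) h
      simp [hbdef, zero_pow (by omega : n ≠ 0)] at this
    have himb : MvPolynomial.finSuccEquiv ℚ 1 b = Polynomial.C (1 + X 0 ^ n) := by
      rw [hbdef, map_add, map_one, map_pow, show ((1 : Fin 2)) = Fin.succ 0 from rfl,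
        MvPolynomial.finSuccEquiv_X_succ, ← Polynomial.C_pow, ← Polynomial.C_1,
        ← Polynomial.C_add]
    have hima : MvPolynomial.finSuccEquiv ℚ 1 a = Polynomial.X * Polynomial.C (X 0) - 1 := by
      rw [hadef, map_sub, map_one, map_mul, show ((1 : Fin 2)) = Fin.succ 0 from rfl,
        MvPolynomial.finSuccEquiv_X_zero, MvPolynomial.finSuccEquiv_X_succ]
    have hdeg0 : ((MvPolynomial.finSuccEquiv ℚ 1) c).natDegree = 0 := by
      have hd : (MvPolynomial.finSuccEquiv ℚ 1) c ∣ (MvPolynomial.finSuccEquiv ℚ 1) b := map_dvd (MvPolynomial.finSuccEquiv ℚ 1).toAlgHom hcb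
      rw [himb] at hd
      have hb0' : Polynomial.C (1 + (X 0 : MvPolynomial (Fin 1) ℚ) ^ n) ≠ 0 := by
        rw [Ne, Polynomial.C_eq_zero]
        intro h
        have := congrArg (MvPolynomial.constantCoeff) h
        simp [zero_pow (by omega : n ≠ 0)] at this
      have := Polynomial.natDegree_le_of_dvd hd hb0'
      simpa using this.trans_eq (Polynomial.natDegree_C _)
    obtain ⟨c₀, hc₀⟩ := Polynomial.natDegree_eq_zero.1 hdeg0
    have hcd : c₀ ∣ (-1 : MvPolynomial (Fin 1) ℚ) := by
      have hd : (MvPolynomial.finSuccEquiv ℚ 1) c ∣ (MvPolynomial.finSuccEquiv ℚ 1) a := map_dvd (MvPolynomial.finSuccEquiv ℚ 1).toAlgHom hca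
      rw [hima, ← hc₀] at hd
      have := (Polynomial.C_dvd_iff_dvd_coeff c₀ _).1 hd 0
      simpa using this
    have hu0 : IsUnit c₀ := isUnit_of_dvd_unit hcd (IsUnit.neg isUnit_one)
    have hu1 : IsUnit ((MvPolynomial.finSuccEquiv ℚ 1) c) := by
      rw [← hc₀]; exact Polynomial.isUnit_C.2 hu0
    have := hu1.map (MvPolynomial.finSuccEquiv ℚ 1).symm
    simpa using this
  have hirr := irred_linear a b ha hcop
  rw [← himg] at hirr
  exact (MulEquiv.irreducible_iff (MvPolynomial.finSuccEquiv ℚ 2).toMulEquiv).1 hirr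

variable (n : ℕ)

noncomputable abbrev Ih : Ideal (MvPolynomial (Fin 3) ℚ) := Ideal.span {hpol n}

noncomputable abbrev D := MvPolynomial (Fin 3) ℚ ⧸ Ih n

theorem prime_hpol (hn1 : 1 ≤ n) : Prime (hpol n) :=
  UniqueFactorizationMonoid.irreducible_iff_prime.1 (irreducible_hpol n hn1)

theorem isDomainD (hn1 : 1 ≤ n) : IsDomain (D n) := by
  rw [Ideal.Quotient.isDomain_iff_prime]
  exact (Ideal.span_singleton_prime (prime_hpol n hn1).ne_zero).2 (prime_hpol n hn1)

/-- generators in `D` -/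
noncomputable def dz : D n := Ideal.Quotient.mk _ (X 0)
noncomputable def dy : D n := Ideal.Quotient.mk _ (X 1)
noncomputable def dx : D n := Ideal.Quotient.mk _ (X 2)

/-- the forward map -/
noncomputable def φ : MvPolynomial (Fin 4) ℚ →ₐ[ℚ] D n :=
  aeval ![dx n, dy n, dx n * dy n - 1, dz n]

noncomputable abbrev I4 : Ideal (MvPolynomial (Fin 4) ℚ) := Ideal.span
    {(MvPolynomial.X 0 * MvPolynomial.X 1 - (1 + MvPolynomial.X 2) : MvPolynomial (Fin 4) ℚ),
      MvPolynomial.X 2 * MvPolynomial.X 3 - (1 + MvPolynomial.X 0 ^ n)}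

theorem φ_vanish : ∀ a ∈ I4 n, φ n a = 0 := by
  have hle : I4 n ≤ RingHom.ker (φ n).toRingHom := by
    rw [Ideal.span_le]
    rintro p hp
    simp only [Set.mem_insert_iff, Set.mem_singleton_iff] at hp
    simp only [SetLike.mem_coe, RingHom.mem_ker]
    rcases hp with rfl | rfl
    · show φ n _ = 0
      simp only [φ, map_sub, map_mul, map_add, map_one, aeval_X]
      simp only [Matrix.cons_val_zero, Matrix.cons_val_one, Matrix.head_cons,
        Matrix.cons_val_two, Matrix.tail_cons]
      ring
    · show φ n _ = 0
      simp only [φ, map_sub, map_mul, map_add, map_one, map_pow, aeval_X]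
      simp only [Matrix.cons_val_zero, Matrix.cons_val_one, Matrix.head_cons,
        Matrix.cons_val_two, Matrix.tail_cons, Matrix.cons_val_three]
      have : (dx n * dy n - 1) * dz n - (1 + dx n ^ n)
          = Ideal.Quotient.mk (Ih n) (hpol n) := by
        simp only [hpol, dx, dy, dz, map_sub, map_mul, map_add, map_one, map_pow]
        ring
      rw [this, Ideal.Quotient.eq_zero_iff_mem]
      exact Ideal.subset_span rfl
  intro a ha
  exact hle ha

noncomputable def φ' : clusterAlgRank2 n →+* D n :=
  Ideal.Quotient.lift (I4 n) (φ n).toRingHom (φ_vanish n)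

/-- the backward map -/
noncomputable def ψ : MvPolynomial (Fin 3) ℚ →ₐ[ℚ] clusterAlgRank2 n :=
  aeval ![Ideal.Quotient.mk (I4 n) (X 3), Ideal.Quotient.mk (I4 n) (X 1),
    Ideal.Quotient.mk (I4 n) (X 0)]

theorem ψ_vanish : ∀ a ∈ Ih n, ψ n a = 0 := by
  have hle : Ih n ≤ RingHom.ker (ψ n).toRingHom := by
    rw [Ideal.span_le]
    rintro p hp
    simp only [Set.mem_singleton_iff] at hp
    simp only [SetLike.mem_coe, RingHom.mem_ker]
    subst hp
    show ψ n (hpol n) = 0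
    have h1 : ψ n (hpol n) = Ideal.Quotient.mk (I4 n)
        (X 3 * (X 1 * X 0 - 1) - (1 + X 0 ^ n)) := by
      simp only [ψ, hpol, map_sub, map_mul, map_add, map_one, map_pow, aeval_X]
      simp only [Matrix.cons_val_zero, Matrix.cons_val_one, Matrix.head_cons,
        Matrix.cons_val_two, Matrix.tail_cons]
      try ring
    rw [h1, Ideal.Quotient.eq_zero_iff_mem]
    refine Ideal.mem_span_pair.2 ⟨X 3, 1, by ring⟩
  intro a ha
  exact hle ha

noncomputable def ψ' : D n →+* clusterAlgRank2 n :=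
  Ideal.Quotient.lift (Ih n) (ψ n).toRingHom (ψ_vanish n)

set_option synthInstance.maxHeartbeats 1000000 in
set_option maxHeartbeats 1000000 in
theorem comp1 : (ψ' n).comp (φ' n) = RingHom.id _ := by
  apply Ideal.Quotient.ringHom_ext
  apply MvPolynomial.ringHom_ext
  · intro r
    exact RingHom.congr_fun (Subsingleton.elim
      ((((ψ' n).comp (φ' n)).comp (Ideal.Quotient.mk (I4 n))).comp (MvPolynomial.C))
      (((RingHom.id _).comp (Ideal.Quotient.mk (I4 n))).comp (MvPolynomial.C))) r
  · intro i
    fin_cases i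
    · simp [φ', ψ', φ, ψ, dx]
    · simp [φ', ψ', φ, ψ, dy]
    · have key : Ideal.Quotient.mk (I4 n) (X 0) * Ideal.Quotient.mk (I4 n) (X 1) - 1
          = Ideal.Quotient.mk (I4 n) (X 2) := by
        rw [← map_mul, show (1 : clusterAlgRank2 n) = Ideal.Quotient.mk (I4 n) 1 from rfl,
          ← map_sub, Ideal.Quotient.mk_eq_mk_iff_sub_mem]
        exact Ideal.mem_span_pair.2 ⟨1, 0, by ring⟩
      simp [φ', ψ', φ, ψ, dx, dy, key]
    · simp [φ', ψ', φ, ψ, dz]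

set_option synthInstance.maxHeartbeats 1000000 in
set_option maxHeartbeats 1000000 in
theorem comp2 : (φ' n).comp (ψ' n) = RingHom.id _ := by
  apply Ideal.Quotient.ringHom_ext
  apply MvPolynomial.ringHom_ext
  · intro r
    exact RingHom.congr_fun (Subsingleton.elim
      ((((φ' n).comp (ψ' n)).comp (Ideal.Quotient.mk (Ih n))).comp (MvPolynomial.C))
      (((RingHom.id _).comp (Ideal.Quotient.mk (Ih n))).comp (MvPolynomial.C))) r
  · intro i
    fin_cases i
    · simp [φ', ψ', φ, ψ, dz]
    · simp [φ', ψ', φ, ψ, dy]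
    · simp [φ', ψ', φ, ψ, dx]

/-- the isomorphism -/
noncomputable def clusterIso : clusterAlgRank2 n ≃+* D n :=
  RingEquiv.ofRingHom (φ' n) (ψ' n) (comp2 n) (comp1 n)

/-- rational point evaluation: z = 1+2^n, y = 1, x = 2 -/
noncomputable def εT : MvPolynomial (Fin 3) ℚ →ₐ[ℚ] ℚ := aeval ![1 + 2 ^ n, 1, 2]

theorem ε_vanish : ∀ a ∈ Ih n, εT n a = 0 := by
  have hle : Ih n ≤ RingHom.ker (εT n).toRingHom := by
    rw [Ideal.span_le]
    rintro p hp
    simp only [Set.mem_singleton_iff] at hp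
    subst hp
    simp only [SetLike.mem_coe, RingHom.mem_ker]
    show εT n (hpol n) = 0
    simp only [εT, hpol, map_sub, map_mul, map_add, map_one, map_pow, aeval_X]
    simp only [Matrix.cons_val_zero, Matrix.cons_val_one, Matrix.head_cons,
      Matrix.cons_val_two, Matrix.tail_cons]
    ring
  intro a ha
  exact hle ha

noncomputable def ε : D n →+* ℚ :=
  Ideal.Quotient.lift (Ih n) (εT n).toRingHom (ε_vanish n)

theorem dx_ne_zero : dx n ≠ 0 := by
  intro h
  have := congrArg (ε n) h
  simp only [dx, ε, Ideal.Quotient.lift_mk, map_zero] at this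
  simp only [AlgHom.toRingHom_eq_coe, RingHom.coe_coe, εT, aeval_X] at this
  simp only [Matrix.cons_val_two, Matrix.tail_cons, Matrix.head_cons] at this
  norm_num at this

theorem dz_ne_zero : dz n ≠ 0 := by
  intro h
  have := congrArg (ε n) h
  simp only [dz, ε, Ideal.Quotient.lift_mk, map_zero] at this
  simp only [AlgHom.toRingHom_eq_coe, RingHom.coe_coe, εT, aeval_X] at this
  norm_num at this
  have : (0:ℚ) < 2 ^ n := by positivity
  linarith

section PrimeDx

variable (hn1 : 1 ≤ n)

noncomputable abbrev Jx : Ideal (MvPolynomial (Fin 3) ℚ) := Ideal.span {hpol n, X 2}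

noncomputable def Φx : MvPolynomial (Fin 3) ℚ →ₐ[ℚ] Polynomial ℚ :=
  aeval ![-1, Polynomial.X, 0]

theorem Φx_vanish (hn1 : 1 ≤ n) : ∀ a ∈ Jx n, Φx a = 0 := by
  have hle : Jx n ≤ RingHom.ker Φx.toRingHom := by
    rw [Ideal.span_le]
    rintro p hp
    simp only [Set.mem_insert_iff, Set.mem_singleton_iff] at hp
    simp only [SetLike.mem_coe, RingHom.mem_ker]
    rcases hp with rfl | rfl
    · show Φx (hpol n) = 0
      simp only [Φx, hpol, map_sub, map_mul, map_add, map_one, map_pow, aeval_X]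
      simp only [Matrix.cons_val_zero, Matrix.cons_val_one, Matrix.head_cons,
        Matrix.cons_val_two, Matrix.tail_cons]
      rw [zero_pow (by omega : n ≠ 0)]
      ring
    · show Φx (X 2) = 0
      simp [Φx]
  intro a ha
  exact hle ha

noncomputable def Φx' (hn1 : 1 ≤ n) : (MvPolynomial (Fin 3) ℚ ⧸ Jx n) →+* Polynomial ℚ :=
  Ideal.Quotient.lift (Jx n) Φx.toRingHom (Φx_vanish n hn1)

noncomputable def Ψx : Polynomial ℚ →+* (MvPolynomial (Fin 3) ℚ ⧸ Jx n) :=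
  (Polynomial.aeval (Ideal.Quotient.mk (Jx n) (X 1))).toRingHom

theorem Ψx_comp (hn1 : 1 ≤ n) : (Ψx n).comp (Φx' n hn1) = RingHom.id _ := by
  apply Ideal.Quotient.ringHom_ext
  apply MvPolynomial.ringHom_ext
  · intro r
    exact RingHom.congr_fun (Subsingleton.elim
      ((((Ψx n).comp (Φx' n hn1)).comp (Ideal.Quotient.mk (Jx n))).comp (MvPolynomial.C))
      (((RingHom.id _).comp (Ideal.Quotient.mk (Jx n))).comp (MvPolynomial.C))) r
  · intro i
    fin_cases i
    · -- X 0 ↦ -1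
      have key : Ideal.Quotient.mk (Jx n) (X 0) = -1 := by
        rw [show (-1 : MvPolynomial (Fin 3) ℚ ⧸ Jx n) = Ideal.Quotient.mk (Jx n) (-1) by simp,
          Ideal.Quotient.mk_eq_mk_iff_sub_mem]
        refine Ideal.mem_span_pair.2 ⟨-1, X 0 * X 1 - X 2 ^ (n-1), ?_⟩
        have hpow : X 2 ^ (n-1) * X 2 = (X 2 : MvPolynomial (Fin 3) ℚ) ^ n := by
          rw [← pow_succ, Nat.sub_add_cancel hn1]
        rw [hpol, ← hpow]
        ring
      simp [Φx', Ψx, Φx, key]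
    · simp [Φx', Ψx, Φx]
    · -- X 2 ↦ 0
      have key : Ideal.Quotient.mk (Jx n) (X 2) = 0 := by
        rw [Ideal.Quotient.eq_zero_iff_mem]
        exact Ideal.subset_span (by simp)
      simp [Φx', Ψx, Φx, key]

theorem prime_dx (hn1 : 1 ≤ n) : Prime (dx n) := by
  haveI := isDomainD n hn1
  rw [← Ideal.span_singleton_prime (dx_ne_zero n)]
  have hmap : (Ideal.span {dx n}) = Ideal.map (Ideal.Quotient.mk (Ih n)) (Ideal.span {X 2}) := by
    rw [Ideal.map_span, Set.image_singleton]; rfl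
  rw [hmap, ← Ideal.Quotient.isDomain_iff_prime]
  have hinj : Function.Injective (Φx' n hn1) := by
    intro a b hab
    have h1 := RingHom.congr_fun (Ψx_comp n hn1) a
    have h2 := RingHom.congr_fun (Ψx_comp n hn1) b
    simp only [RingHom.comp_apply, RingHom.id_apply] at h1 h2
    rw [← h1, ← h2, hab]
  haveI : IsDomain (MvPolynomial (Fin 3) ℚ ⧸ Jx n) :=
    Function.Injective.isDomain (Φx' n hn1) hinj
  have e := DoubleQuot.quotQuotEquivQuotSup (Ih n) (Ideal.span {X 2})
  have hsup : Ih n ⊔ Ideal.span {X 2} = Jx n := by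
    rw [← Ideal.span_union, Set.singleton_union]
  rw [hsup] at e
  exact Function.Injective.isDomain e.toRingHom e.injective

end PrimeDx

section PrimeDz

/-- `X^n + 1` over `ℚ` -/
noncomputable def pb : Polynomial ℚ := Polynomial.X ^ n + 1

theorem irreducible_pb (hn : ∃ k : ℕ, n = 2 ^ k) : Irreducible (pb n) := by
  obtain ⟨k, rfl⟩ := hn
  have h := Polynomial.cyclotomic.irreducible_rat (n := 2 ^ (k + 1)) (by positivity)
  rw [Polynomial.cyclotomic_prime_pow_eq_geom_sum Nat.prime_two] at h
  have : ∑ i ∈ Finset.range 2, ((Polynomial.X : Polynomial ℚ) ^ 2 ^ k) ^ i = pb (2 ^ k) := by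
    rw [Finset.sum_range_succ, Finset.sum_range_one, pb]
    ring
  rwa [this] at h

theorem isDomainK (hn : ∃ k : ℕ, n = 2 ^ k) : IsDomain (AdjoinRoot (pb n)) := by
  have hprime : Prime (pb n) :=
    UniqueFactorizationMonoid.irreducible_iff_prime.1 (irreducible_pb n hn)
  have : (Ideal.span {pb n}).IsPrime := (Ideal.span_singleton_prime hprime.ne_zero).2 hprime
  exact (Ideal.Quotient.isDomain_iff_prime (Ideal.span {pb n} : Ideal (Polynomial ℚ))).2 this

noncomputable abbrev Jz : Ideal (MvPolynomial (Fin 3) ℚ) := Ideal.span {hpol n, X 0}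

noncomputable def Φz : MvPolynomial (Fin 3) ℚ →ₐ[ℚ] Polynomial (AdjoinRoot (pb n)) :=
  aeval ![0, Polynomial.X, Polynomial.C (AdjoinRoot.root (pb n))]

theorem root_pow : (AdjoinRoot.root (pb n)) ^ n + 1 = 0 := by
  have := AdjoinRoot.mk_self (f := pb n)
  rw [pb, map_add, map_pow, map_one, AdjoinRoot.mk_X] at this
  exact this

theorem Φz_vanish : ∀ a ∈ Jz n, Φz n a = 0 := by
  have hle : Jz n ≤ RingHom.ker (Φz n).toRingHom := by
    rw [Ideal.span_le]
    rintro p hp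
    simp only [Set.mem_insert_iff, Set.mem_singleton_iff] at hp
    simp only [SetLike.mem_coe, RingHom.mem_ker]
    rcases hp with rfl | rfl
    · show Φz n (hpol n) = 0
      simp only [Φz, hpol, map_sub, map_mul, map_add, map_one, map_pow, aeval_X]
      simp only [Matrix.cons_val_zero, Matrix.cons_val_one, Matrix.head_cons,
        Matrix.cons_val_two, Matrix.tail_cons]
      rw [← Polynomial.C_pow, show ((1 : Polynomial (AdjoinRoot (pb n))))
        = Polynomial.C 1 from rfl, ← Polynomial.C_add]
      rw [show (1 : AdjoinRoot (pb n)) + (AdjoinRoot.root (pb n)) ^ n = 0 by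
        rw [add_comm]; exact root_pow n]
      simp
    · show Φz n (X 0) = 0
      simp [Φz]
  intro a ha
  exact hle ha

noncomputable def Φz' : (MvPolynomial (Fin 3) ℚ ⧸ Jz n) →+* Polynomial (AdjoinRoot (pb n)) :=
  Ideal.Quotient.lift (Jz n) (Φz n).toRingHom (Φz_vanish n)

theorem pb_eval : Polynomial.eval₂ (algebraMap ℚ (MvPolynomial (Fin 3) ℚ ⧸ Jz n))
    (Ideal.Quotient.mk (Jz n) (X 2)) (pb n) = 0 := by
  rw [pb, Polynomial.eval₂_add, Polynomial.eval₂_pow, Polynomial.eval₂_X, Polynomial.eval₂_one]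
  rw [show ((1 : MvPolynomial (Fin 3) ℚ ⧸ Jz n)) = Ideal.Quotient.mk (Jz n) 1 from rfl,
    ← map_pow, ← map_add, Ideal.Quotient.eq_zero_iff_mem]
  refine Ideal.mem_span_pair.2 ⟨-1, X 1 * X 2 - 1, ?_⟩
  rw [hpol]; ring

noncomputable def Ψz : Polynomial (AdjoinRoot (pb n)) →+* (MvPolynomial (Fin 3) ℚ ⧸ Jz n) :=
  Polynomial.eval₂RingHom
    (AdjoinRoot.lift (algebraMap ℚ _) (Ideal.Quotient.mk (Jz n) (X 2)) (pb_eval n))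
    (Ideal.Quotient.mk (Jz n) (X 1))

theorem Ψz_comp : (Ψz n).comp (Φz' n) = RingHom.id _ := by
  apply Ideal.Quotient.ringHom_ext
  apply MvPolynomial.ringHom_ext
  · intro r
    exact RingHom.congr_fun (Subsingleton.elim
      ((((Ψz n).comp (Φz' n)).comp (Ideal.Quotient.mk (Jz n))).comp (MvPolynomial.C))
      (((RingHom.id _).comp (Ideal.Quotient.mk (Jz n))).comp (MvPolynomial.C))) r
  · intro i
    fin_cases i
    · -- X 0 ↦ 0
      have key : Ideal.Quotient.mk (Jz n) (X 0) = 0 := by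
        rw [Ideal.Quotient.eq_zero_iff_mem]
        exact Ideal.subset_span (by simp)
      simp [Φz', Ψz, Φz, key]
    · simp [Φz', Ψz, Φz]
    · simp [Φz', Ψz, Φz, AdjoinRoot.lift_root]

theorem prime_dz (hn1 : 1 ≤ n) (hn : ∃ k : ℕ, n = 2 ^ k) : Prime (dz n) := by
  haveI := isDomainD n hn1
  rw [← Ideal.span_singleton_prime (dz_ne_zero n)]
  have hmap : (Ideal.span {dz n}) = Ideal.map (Ideal.Quotient.mk (Ih n)) (Ideal.span {X 0}) := by
    rw [Ideal.map_span, Set.image_singleton]; rfl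
  rw [hmap, ← Ideal.Quotient.isDomain_iff_prime]
  have hinj : Function.Injective (Φz' n) := by
    intro a b hab
    have h1 := RingHom.congr_fun (Ψz_comp n) a
    have h2 := RingHom.congr_fun (Ψz_comp n) b
    simp only [RingHom.comp_apply, RingHom.id_apply] at h1 h2
    rw [← h1, ← h2, hab]
  haveI := isDomainK n hn
  haveI : IsDomain (MvPolynomial (Fin 3) ℚ ⧸ Jz n) :=
    Function.Injective.isDomain (Φz' n) hinj
  have e := DoubleQuot.quotQuotEquivQuotSup (Ih n) (Ideal.span {X 0})
  have hsup : Ih n ⊔ Ideal.span {X 0} = Jz n := by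
    rw [← Ideal.span_union, Set.singleton_union]
  rw [hsup] at e
  exact Function.Injective.isDomain e.toRingHom e.injective

end PrimeDz

/-! localization -/

noncomputable abbrev V := MvPolynomial (Fin 2) ℚ

noncomputable abbrev w : V := X 0 * X 1

noncomputable abbrev L₂ := Localization.Away (w)

noncomputable abbrev M : Submonoid (D n) := Submonoid.closure {dx n, dz n}

noncomputable abbrev L := Localization (M n)

theorem hw_ne : (w : V) ≠ 0 :=
  mul_ne_zero (MvPolynomial.X_ne_zero 0) (MvPolynomial.X_ne_zero 1)

theorem hpow_le : Submonoid.powers (w) ≤ nonZeroDivisors V := by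
  intro s hs
  obtain ⟨m, rfl⟩ := hs
  exact mem_nonZeroDivisors_of_ne_zero (pow_ne_zero _ (hw_ne))

noncomputable instance : IsDomain (L₂) := IsLocalization.isDomain_localization hpow_le

noncomputable instance : UniqueFactorizationMonoid (L₂) :=
  ufd_of_isLocalization (Submonoid.powers w) hpow_le

/-- `T → L₂`, `z ↦ z`, `y ↦ (z+1+x^n)/(zx)`, `x ↦ x`; in `V`, var 0 = z, var 1 = x -/
noncomputable def g : MvPolynomial (Fin 3) ℚ →+* L₂ :=
  eval₂Hom ((algebraMap V L₂).comp MvPolynomial.C)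
    ![algebraMap V L₂ (X 0),
      algebraMap V L₂ (X 0 + 1 + X 1 ^ n) * IsLocalization.Away.invSelf w,
      algebraMap V L₂ (X 1)]

theorem g_hpol : g n (hpol n) = 0 := by
  have hws : algebraMap V L₂ (X 0) * algebraMap V L₂ (X 1) * IsLocalization.Away.invSelf w = 1 := by
    rw [← map_mul]
    exact IsLocalization.Away.mul_invSelf w
  simp only [g, hpol, map_sub, map_mul, map_add, map_one, map_pow, eval₂Hom_X']
  simp only [Matrix.cons_val_zero, Matrix.cons_val_one, Matrix.head_cons,
    Matrix.cons_val_two, Matrix.tail_cons]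
  linear_combination (algebraMap V L₂ (X 0) + 1 + algebraMap V L₂ (X 1) ^ n) * hws

theorem g_vanish : ∀ a ∈ Ih n, g n a = 0 := by
  have hle : Ih n ≤ RingHom.ker (g n) := by
    rw [Ideal.span_le]
    rintro p hp
    simp only [Set.mem_singleton_iff] at hp
    subst hp
    simp only [SetLike.mem_coe, RingHom.mem_ker]
    exact g_hpol n
  intro a ha
  exact hle ha

noncomputable def gq : D n →+* L₂ := Ideal.Quotient.lift (Ih n) (g n) (g_vanish n)

theorem gq_units : ∀ y : M n, IsUnit (gq n y) := by
  rintro ⟨y, hy⟩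
  induction hy using Submonoid.closure_induction with
  | mem p hp =>
    simp only [Set.mem_insert_iff, Set.mem_singleton_iff] at hp
    have hws : algebraMap V L₂ (X 0) * algebraMap V L₂ (X 1) * IsLocalization.Away.invSelf w = 1 := by
      rw [← map_mul]; exact IsLocalization.Away.mul_invSelf w
    rcases hp with rfl | rfl
    · -- dx ↦ algebraMap (X 1)
      have : gq n (dx n) = algebraMap V L₂ (X 1) := by
        simp [gq, dx, g]
      rw [this]
      exact IsUnit.of_mul_eq_one (algebraMap V L₂ (X 0) * IsLocalization.Away.invSelf w)
        (by rw [← mul_assoc, mul_comm (algebraMap V L₂ (X 1))]; exact hws)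
    · have : gq n (dz n) = algebraMap V L₂ (X 0) := by
        simp [gq, dz, g]
      rw [this]
      exact IsUnit.of_mul_eq_one (algebraMap V L₂ (X 1) * IsLocalization.Away.invSelf w)
        (by rw [← mul_assoc]; exact hws)
  | one => simp
  | mul a b ha hb iha ihb =>
    rw [map_mul]
    exact iha.mul ihb

noncomputable def Θ : L n →+* L₂ := IsLocalization.lift (M := M n) (S := L n) (gq_units n)

noncomputable def k : V →+* L n :=
  eval₂Hom ((algebraMap (D n) (L n)).comp ((Ideal.Quotient.mk (Ih n)).comp MvPolynomial.C))
    ![algebraMap (D n) (L n) (dz n), algebraMap (D n) (L n) (dx n)]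

theorem k_w_unit : IsUnit (k n w) := by
  have : k n w = algebraMap (D n) (L n) (dz n * dx n) := by
    simp [k, w, map_mul]
  rw [this]
  exact IsLocalization.map_units (L n) ⟨dz n * dx n,
    mul_mem (Submonoid.subset_closure (s := ({dx n, dz n} : Set (D n)))
      (Set.mem_insert_of_mem _ rfl))
      (Submonoid.subset_closure (s := ({dx n, dz n} : Set (D n))) (Set.mem_insert _ _))⟩

noncomputable def Θ' : L₂ →+* L n := IsLocalization.Away.lift w (k_w_unit n)

theorem Θ'_alg (v : V) : Θ' n (algebraMap V L₂ v) = k n v :=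
  IsLocalization.Away.lift_eq w (k_w_unit n) v

theorem Θ_alg (d : D n) : Θ n (algebraMap (D n) (L n) d) = gq n d :=
  IsLocalization.lift_eq _ _

theorem E2 : (Θ n).comp (Θ' n) = RingHom.id _ := by
  apply IsLocalization.ringHom_ext (Submonoid.powers w)
  apply MvPolynomial.ringHom_ext
  · intro r
    exact RingHom.congr_fun (Subsingleton.elim
      ((((Θ n).comp (Θ' n)).comp (algebraMap V L₂)).comp (MvPolynomial.C))
      (((RingHom.id _).comp (algebraMap V L₂)).comp (MvPolynomial.C))) r
  · intro i
    fin_cases i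
    · -- X 0
      show (Θ n) ((Θ' n) (algebraMap V L₂ (X 0))) = algebraMap V L₂ (X 0)
      rw [Θ'_alg, show k n (X 0) = algebraMap (D n) (L n) (dz n) by simp [k], Θ_alg]
      simp [gq, dz, g]
    · show (Θ n) ((Θ' n) (algebraMap V L₂ (X 1))) = algebraMap V L₂ (X 1)
      rw [Θ'_alg, show k n (X 1) = algebraMap (D n) (L n) (dx n) by simp [k], Θ_alg]
      simp [gq, dx, g]

theorem E1 : (Θ' n).comp (Θ n) = RingHom.id _ := by
  apply IsLocalization.ringHom_ext (M n) (S := L n)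
  apply Ideal.Quotient.ringHom_ext
  apply MvPolynomial.ringHom_ext
  · intro r
    exact RingHom.congr_fun (Subsingleton.elim
      (((((Θ' n).comp (Θ n)).comp (algebraMap (D n) (L n))).comp
        (Ideal.Quotient.mk (Ih n))).comp (MvPolynomial.C))
      ((((RingHom.id _).comp (algebraMap (D n) (L n))).comp
        (Ideal.Quotient.mk (Ih n))).comp (MvPolynomial.C))) r
  · intro i
    fin_cases i
    · -- X 0 = z
      show (Θ' n) ((Θ n) (algebraMap (D n) (L n) (Ideal.Quotient.mk (Ih n) (X 0))))
        = algebraMap (D n) (L n) (Ideal.Quotient.mk (Ih n) (X 0))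
      rw [Θ_alg, show gq n (Ideal.Quotient.mk (Ih n) (X 0)) = algebraMap V L₂ (X 0) by simp [gq, g],
        Θ'_alg, show k n (X 0) = algebraMap (D n) (L n) (dz n) by simp [k]]
      rfl
    · -- X 1 = y
      show (Θ' n) ((Θ n) (algebraMap (D n) (L n) (Ideal.Quotient.mk (Ih n) (X 1))))
        = algebraMap (D n) (L n) (Ideal.Quotient.mk (Ih n) (X 1))
      rw [Θ_alg, show gq n (Ideal.Quotient.mk (Ih n) (X 1))
        = algebraMap V L₂ (X 0 + 1 + X 1 ^ n) * IsLocalization.Away.invSelf w by simp [gq, g]]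
      rw [map_mul, Θ'_alg]
      have hu : IsUnit (algebraMap (D n) (L n) (dz n * dx n)) :=
        IsLocalization.map_units (L n) ⟨dz n * dx n,
          mul_mem (Submonoid.subset_closure (s := ({dx n, dz n} : Set (D n)))
            (Set.mem_insert_of_mem _ rfl))
            (Submonoid.subset_closure (s := ({dx n, dz n} : Set (D n))) (Set.mem_insert _ _))⟩
      apply hu.mul_left_cancel
      have hinv : algebraMap (D n) (L n) (dz n * dx n) * (Θ' n) (IsLocalization.Away.invSelf w)
          = 1 := by
        rw [show algebraMap (D n) (L n) (dz n * dx n) = Θ' n (algebraMap V L₂ w) by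
          rw [Θ'_alg]; simp [k, w, map_mul], ← map_mul, IsLocalization.Away.mul_invSelf, map_one]
      have hD : dz n + 1 + dx n ^ n = dz n * dx n * dy n := by
        simp only [dz, dx, dy, ← map_mul, ← map_pow, ← map_add, ← map_one (Ideal.Quotient.mk (Ih n))]
        rw [Ideal.Quotient.mk_eq_mk_iff_sub_mem]
        refine Ideal.mem_span_singleton.2 ⟨-1, ?_⟩
        rw [hpol]; ring
      calc algebraMap (D n) (L n) (dz n * dx n) *
            (k n (X 0 + 1 + X 1 ^ n) * (Θ' n) (IsLocalization.Away.invSelf w))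
          = k n (X 0 + 1 + X 1 ^ n) *
            (algebraMap (D n) (L n) (dz n * dx n) * (Θ' n) (IsLocalization.Away.invSelf w)) := by
            ring
        _ = k n (X 0 + 1 + X 1 ^ n) := by rw [hinv, mul_one]
        _ = algebraMap (D n) (L n) (dz n + 1 + dx n ^ n) := by
            simp [k, map_add, map_pow, map_one]
        _ = algebraMap (D n) (L n) (dz n * dx n) *
            algebraMap (D n) (L n) (Ideal.Quotient.mk (Ih n) (X 1)) := by
            rw [hD, map_mul]; rfl
    · -- X 2 = x
      show (Θ' n) ((Θ n) (algebraMap (D n) (L n) (Ideal.Quotient.mk (Ih n) (X 2))))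
        = algebraMap (D n) (L n) (Ideal.Quotient.mk (Ih n) (X 2))
      rw [Θ_alg, show gq n (Ideal.Quotient.mk (Ih n) (X 2)) = algebraMap V L₂ (X 1) by simp [gq, g],
        Θ'_alg, show k n (X 1) = algebraMap (D n) (L n) (dx n) by simp [k]]
      rfl

theorem isDomainL (hn1 : 1 ≤ n) : IsDomain (L n) := by
  haveI := isDomainD n hn1
  apply IsLocalization.isDomain_localization (M := M n)
  intro s hs
  refine mem_nonZeroDivisors_of_ne_zero ?_
  induction hs using Submonoid.closure_induction with
  | mem p hp =>
    simp only [Set.mem_insert_iff, Set.mem_singleton_iff] at hp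
    rcases hp with rfl | rfl
    · exact dx_ne_zero n
    · exact dz_ne_zero n
  | one => exact one_ne_zero
  | mul a b _ _ ha hb => exact mul_ne_zero ha hb

theorem ufm_L (hn1 : 1 ≤ n) :
    letI := isDomainL n hn1
    UniqueFactorizationMonoid (L n) := by
  letI := isDomainL n hn1
  exact MulEquiv.uniqueFactorizationMonoid
    (RingEquiv.ofRingHom (Θ' n) (Θ n) (E1 n) (E2 n)).toMulEquiv inferInstance

theorem ufm_D (n : ℕ) (hn1 : 1 ≤ n) (hn : ∃ k : ℕ, n = 2 ^ k) :
    letI := isDomainD n hn1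
    UniqueFactorizationMonoid (D n) := by
  letI := isDomainD n hn1
  haveI : WfDvdMonoid (D n) := IsNoetherianRing.wfDvdMonoid
  haveI := isDomainL n hn1
  haveI : UniqueFactorizationMonoid (L n) := ufm_L n hn1
  exact nagata_ufd (P := ({dx n, dz n} : Set (D n)))
    (by
      rintro p hp
      simp only [Set.mem_insert_iff, Set.mem_singleton_iff] at hp
      rcases hp with rfl | rfl
      · exact prime_dx n hn1
      · exact prime_dz n hn1 hn) (L n)

end ClusterRank2

/-- If `n` is a power of `2`, the rank-2 cluster algebra with exchange matrix
`[[0,n],[-1,0]]` over `ℚ` is a unique factorization domain. -/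
theorem stmt12 (n : ℕ) (hn1 : 1 ≤ n) (hn : ∃ k : ℕ, n = 2 ^ k) :
    ∃ _ : IsDomain (clusterAlgRank2 n), UniqueFactorizationMonoid (clusterAlgRank2 n) := by
  letI hD := ClusterRank2.isDomainD n hn1
  have e : clusterAlgRank2 n ≃+* ClusterRank2.D n := ClusterRank2.clusterIso n
  haveI hdom : IsDomain (clusterAlgRank2 n) :=
    Function.Injective.isDomain e.toRingHom e.injective
  haveI hufmD : UniqueFactorizationMonoid (ClusterRank2.D n) := ClusterRank2.ufm_D n hn1 hn
  have hufm : UniqueFactorizationMonoid (clusterAlgRank2 n) :=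
    MulEquiv.uniqueFactorizationMonoid e.symm.toMulEquiv hufmD
  exact ⟨hdom, hufm⟩
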